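/- Let κ be an inaccessible cardinal and B a complete Boolean algebra such that for all sets I, J of cardinality less than κ and every family ψ : I × J → B one has inf_{i∈I} sup_{j∈J} ψ(i,j) ≤ sup over functions f : I → J of inf_{i∈I} ψ(i, f(i)). Then B satisfies the transfinite distributivity law at every cardinal γ < κ. -/

import Mathlib

/-- Restriction of `f : Iio β → Iio o` to `Iio α` for `α ≤ β`. -/
def resFn {o β α : Ordinal} (h : α ≤ β) (f : Set.Iio β → Set.Iio o) :
    Set.Iio α → Set.Iio o :=
  fun x => f ⟨x.1, lt_of_lt_of_le x.2 h⟩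

/-- The unique function `Iio 0 → Iio o`. -/
def emptyFn (o : Ordinal) : Set.Iio (0 : Ordinal) → Set.Iio o :=
  fun t => absurd t.2 (by simp)

lemma resFn_zero {o β : Ordinal} (h : (0 : Ordinal) ≤ β) (f : Set.Iio β → Set.Iio o) :
    resFn h f = emptyFn o :=
  funext fun t => absurd t.2 (by simp)

/-- The transfinite distributivity law at (the initial ordinal of) `o`, for a complete lattice. -/
def TransfiniteDistrib (L : Type*) [CompleteLattice L] (o : Ordinal) : Prop :=
  ∀ (h0 : (0 : Ordinal) < o)
    (a : (β : Set.Iio o) → (Set.Iio β.1 → Set.Iio o) → L),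
    (∀ (β : Ordinal) (hβ : β + 1 < o) (f : Set.Iio β → Set.Iio o),
        a ⟨β, Set.mem_Iio.mpr (lt_of_le_of_lt (le_self_add : β ≤ β + 1) hβ)⟩ f ≤
          ⨆ g : {g : Set.Iio (β + 1) → Set.Iio o // resFn (le_self_add : β ≤ β + 1) g = f},
            a ⟨β + 1, Set.mem_Iio.mpr hβ⟩ g.1) →
    (∀ (β : Set.Iio o), Order.IsSuccLimit β.1 → ∀ f : Set.Iio β.1 → Set.Iio o,
        a β f = ⨅ α : Set.Iio β.1,
          a ⟨α.1, Set.mem_Iio.mpr (lt_trans α.2 β.2)⟩ (resFn (le_of_lt α.2) f)) →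
    a ⟨0, Set.mem_Iio.mpr h0⟩ (emptyFn o) ≤
      ⨆ f : Set.Iio o → Set.Iio o, ⨅ β : Set.Iio o, a β (resFn (le_of_lt β.2) f)

universe u

universe v


namespace TDAux

open Set Ordinal

/-- extend `f` to `Iio (β+1)` with last value `j`. -/
noncomputable def extFn {o β : Ordinal} (f : Set.Iio β → Set.Iio o) (j : Set.Iio o) :
    Set.Iio (β + 1) → Set.Iio o :=
  fun x => if h : x.1 < β then f ⟨x.1, h⟩ else j

lemma resFn_extFn {o β : Ordinal} (f : Set.Iio β → Set.Iio o) (j : Set.Iio o) :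
    resFn ((le_self_add : β ≤ β + 1)) (extFn f j) = f := by
  funext x
  exact dif_pos x.2

lemma extFn_last {o β : Ordinal} (f : Set.Iio β → Set.Iio o) (j : Set.Iio o) :
    extFn f j ⟨β, Order.lt_succ β⟩ = j := by
  simp only [extFn, lt_irrefl, dif_neg, not_false_iff]

lemma extFn_resFn {o β : Ordinal} (g : Set.Iio (β + 1) → Set.Iio o) :
    extFn (resFn ((le_self_add : β ≤ β + 1)) g) (g ⟨β, Order.lt_succ β⟩) = g := by
  funext x
  by_cases h : x.1 < β
  · simp only [extFn, h, dif_pos, resFn]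
  · have : x = ⟨β, Order.lt_succ β⟩ := by
      ext
      exact le_antisymm (Order.lt_succ_iff.mp x.2) (not_lt.mp h)
    rw [this]
    simp only [extFn, lt_irrefl, dif_neg, not_false_iff]

variable {B : Type v} [CompleteBooleanAlgebra B] (o : Ordinal.{u})
  (A : ∀ β : Ordinal.{u}, (Set.Iio β → Set.Iio o) → B)

/-- `bFun β f = ⨅ { A α (f|α) : α ≤ β, α < o }`. -/
def bFun (β : Ordinal.{u}) (f : Set.Iio β → Set.Iio o) : B :=
  ⨅ (α : Set.Iio o) (h : α.1 ≤ β), A α.1 (resFn h f)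

lemma bFun_le_A {β : Ordinal.{u}} (hβ : β < o) (f : Set.Iio β → Set.Iio o) :
    bFun o A β f ≤ A β f :=
  le_trans (iInf_le _ (⟨β, hβ⟩ : Set.Iio o)) (iInf_le _ le_rfl)

lemma bFun_res {α β : Ordinal.{u}} (h : α ≤ β) (f : Set.Iio β → Set.Iio o) :
    bFun o A β f ≤ bFun o A α (resFn h f) := by
  refine le_iInf fun δ => le_iInf fun hδ => ?_
  exact le_trans (iInf_le _ δ) (iInf_le _ (hδ.trans h))

/-- The disjointified tree. -/
noncomputable def D : (β : Ordinal.{u}) → (Set.Iio β → Set.Iio o) → B :=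
  fun β => Ordinal.limitRecOn β
    (fun _ => A 0 (emptyFn o))
    (fun δ ih g =>
      ih (resFn ((le_self_add : δ ≤ δ + 1)) g) ⊓ A (δ + 1) g ⊓
        (⨆ (j : Set.Iio o) (_ : j < g ⟨δ, Order.lt_succ δ⟩),
          A (δ + 1) (extFn (resFn ((le_self_add : δ ≤ δ + 1)) g) j))ᶜ)
    (fun δ _ ih f => ⨅ α : Set.Iio δ, ih α.1 α.2 (resFn (le_of_lt α.2) f))

lemma D_zero (f : Set.Iio (0:Ordinal.{u}) → Set.Iio o) : D o A 0 f = A 0 (emptyFn o) := by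
  rw [D, Ordinal.limitRecOn_zero]

lemma D_succ (δ : Ordinal.{u}) (g : Set.Iio (δ + 1) → Set.Iio o) :
    D o A (δ + 1) g = D o A δ (resFn ((le_self_add : δ ≤ δ + 1)) g) ⊓ A (δ + 1) g ⊓
        (⨆ (j : Set.Iio o) (_ : j < g ⟨δ, Order.lt_succ δ⟩),
          A (δ + 1) (extFn (resFn ((le_self_add : δ ≤ δ + 1)) g) j))ᶜ := by
  have : D o A (δ + 1) = Ordinal.limitRecOn (motive := fun β => (Set.Iio β → Set.Iio o) → B)
      (Order.succ δ)
      (fun _ => A 0 (emptyFn o))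
      (fun δ ih g =>
        ih (resFn ((le_self_add : δ ≤ δ + 1)) g) ⊓ A (δ + 1) g ⊓
          (⨆ (j : Set.Iio o) (_ : j < g ⟨δ, Order.lt_succ δ⟩),
            A (δ + 1) (extFn (resFn ((le_self_add : δ ≤ δ + 1)) g) j))ᶜ)
      (fun δ _ ih f => ⨅ α : Set.Iio δ, ih α.1 α.2 (resFn (le_of_lt α.2) f)) := rfl
  rw [this, Ordinal.limitRecOn_succ]
  rfl

lemma D_limit {β : Ordinal.{u}} (hβ : Order.IsSuccLimit β) (f : Set.Iio β → Set.Iio o) :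
    D o A β f = ⨅ α : Set.Iio β, D o A α.1 (resFn (le_of_lt α.2) f) := by
  rw [D, Ordinal.limitRecOn_limit (h := hβ)]
  rfl

section

variable (h2' : ∀ β : Ordinal.{u}, Order.IsSuccLimit β → β < o → ∀ f : Set.Iio β → Set.Iio o,
    A β f = ⨅ α : Set.Iio β, A α.1 (resFn (le_of_lt α.2) f))

include h2' in
lemma D_le_bFun : ∀ β : Ordinal.{u}, β ≤ o → ∀ f : Set.Iio β → Set.Iio o,
    D o A β f ≤ bFun o A β f := by
  intro β
  induction β using Ordinal.limitRecOn with
  | zero =>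
    intro _ f
    rw [D_zero]
    refine le_iInf fun α => le_iInf fun hα => ?_
    obtain ⟨v, hv⟩ := α
    obtain rfl : v = 0 := le_antisymm hα (by simp)
    rw [resFn_zero]
  | add_one δ ih =>
    intro hle g
    have hδo : δ < o := lt_of_lt_of_le (Order.lt_succ δ) hle
    refine le_iInf fun α => le_iInf fun hα => ?_
    rcases Order.le_succ_iff_eq_or_le.mp hα with heq | hles
    · -- α = δ + 1
      have h1 : D o A (δ+1) g ≤ A (δ+1) g := by
        rw [D_succ]; exact inf_le_of_left_le inf_le_right
      obtain ⟨v, hv⟩ := α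
      simp only at heq
      subst heq
      exact h1.trans_eq rfl
    · -- α ≤ δ
      have h1 : D o A (δ+1) g ≤ D o A δ (resFn ((le_self_add : δ ≤ δ + 1)) g) := by
        rw [D_succ]; exact inf_le_of_left_le inf_le_left
      refine h1.trans ?_
      refine (ih hδo.le _).trans ?_
      exact le_trans (iInf_le _ α) (iInf_le _ hles)
  | limit δ hδ ih =>
    intro hle f
    rw [D_limit o A hδ]
    refine le_iInf fun α => le_iInf fun hα => ?_
    rcases lt_or_eq_of_le hα with hlt | heq
    · refine le_trans (iInf_le _ ⟨α.1, hlt⟩) ?_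
      refine (ih α.1 hlt (lt_of_lt_of_le hlt hle).le _).trans ?_
      exact le_trans (iInf_le _ α) (iInf_le _ le_rfl)
    · -- α.1 = δ, so δ < o and we use the limit hypothesis h2'
      obtain ⟨v, hv⟩ := α
      simp only at heq
      subst heq
      have hδo : v < o := hv
      rw [show resFn hα f = f from rfl, h2' v hδ hδo]
      refine le_iInf fun x => ?_
      refine le_trans (iInf_le _ x) ?_
      refine (ih x.1 x.2 (lt_of_lt_of_le x.2 hle).le _).trans ?_
      have hxo : x.1 < o := lt_of_lt_of_le x.2 hle
      refine le_trans (iInf_le _ ⟨x.1, hxo⟩) (le_trans (iInf_le _ le_rfl) ?_)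
      -- A x.1 (resFn _ (resFn _ f)) = A x.1 (resFn _ f), by proof irrelevance; but the
      -- subst heq changed things; both are resFn of f restricted to Iio x.1
      exact le_of_eq rfl
end

lemma D_res : ∀ β : Ordinal.{u}, ∀ α : Ordinal.{u}, ∀ h : α ≤ β,
    ∀ f : Set.Iio β → Set.Iio o, D o A β f ≤ D o A α (resFn h f) := by
  intro β
  induction β using Ordinal.limitRecOn with
  | zero =>
    intro α h f
    obtain rfl : α = 0 := le_antisymm h (by simp)
    rw [D_zero, D_zero]
  | add_one δ ih =>
    intro α h g
    rcases Order.le_succ_iff_eq_or_le.mp h with heq | hles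
    · subst heq
      exact le_of_eq rfl
    · have h1 : D o A (δ+1) g ≤ D o A δ (resFn ((le_self_add : δ ≤ δ + 1)) g) := by
        rw [D_succ]; exact inf_le_of_left_le inf_le_left
      exact h1.trans (ih α hles _)
  | limit δ hδ ih =>
    intro α h f
    rcases lt_or_eq_of_le h with hlt | heq
    · rw [D_limit o A hδ]
      exact le_trans (iInf_le _ ⟨α, hlt⟩) (le_of_eq rfl)
    · subst heq
      exact le_of_eq rfl

lemma D_disjoint : ∀ β : Ordinal.{u}, ∀ f f' : Set.Iio β → Set.Iio o,
    f ≠ f' → D o A β f ⊓ D o A β f' = ⊥ := by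
  intro β
  induction β using Ordinal.limitRecOn with
  | zero =>
    intro f f' hne
    exact absurd (funext fun t => absurd t.2 (by simp)) hne
  | add_one δ ih =>
    intro g g' hne
    by_cases hr : resFn ((le_self_add : δ ≤ δ + 1)) g = resFn ((le_self_add : δ ≤ δ + 1)) g'
    · -- the restrictions agree, so the top values differ
      have hval : g ⟨δ, Order.lt_succ δ⟩ ≠ g' ⟨δ, Order.lt_succ δ⟩ := by
        intro hv
        apply hne
        rw [← extFn_resFn g, ← extFn_resFn g', hr, hv]
      -- wlog the first is smaller
      have key : ∀ u u' : Set.Iio (δ+1) → Set.Iio o,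
          resFn ((le_self_add : δ ≤ δ + 1)) u = resFn ((le_self_add : δ ≤ δ + 1)) u' →
          u ⟨δ, Order.lt_succ δ⟩ < u' ⟨δ, Order.lt_succ δ⟩ →
          D o A (δ+1) u ⊓ D o A (δ+1) u' = ⊥ := by
        intro u u' hru hlt
        have h1 : D o A (δ+1) u ≤ A (δ+1) u := by
          rw [D_succ]; exact inf_le_of_left_le inf_le_right
        have h2 : D o A (δ+1) u' ≤
            (⨆ (j : Set.Iio o) (_ : j < u' ⟨δ, Order.lt_succ δ⟩),
              A (δ + 1) (extFn (resFn ((le_self_add : δ ≤ δ + 1)) u') j))ᶜ := by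
          rw [D_succ]; exact inf_le_right
        have h3 : A (δ+1) u ≤
            ⨆ (j : Set.Iio o) (_ : j < u' ⟨δ, Order.lt_succ δ⟩),
              A (δ + 1) (extFn (resFn ((le_self_add : δ ≤ δ + 1)) u') j) := by
          have : extFn (resFn ((le_self_add : δ ≤ δ + 1)) u') (u ⟨δ, Order.lt_succ δ⟩) = u := by
            rw [← hru, extFn_resFn]
          refine le_trans ?_ (le_iSup _ (u ⟨δ, Order.lt_succ δ⟩))
          refine le_trans ?_ (le_iSup _ hlt)
          rw [this]
        refine le_bot_iff.mp ?_
        calc D o A (δ+1) u ⊓ D o A (δ+1) u' ≤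
            (⨆ (j : Set.Iio o) (_ : j < u' ⟨δ, Order.lt_succ δ⟩),
              A (δ + 1) (extFn (resFn ((le_self_add : δ ≤ δ + 1)) u') j)) ⊓
            (⨆ (j : Set.Iio o) (_ : j < u' ⟨δ, Order.lt_succ δ⟩),
              A (δ + 1) (extFn (resFn ((le_self_add : δ ≤ δ + 1)) u') j))ᶜ :=
              inf_le_inf (h1.trans h3) h2
          _ = ⊥ := inf_compl_eq_bot
      rcases lt_or_gt_of_ne hval with hlt | hlt
      · exact key g g' hr hlt
      · rw [inf_comm]; exact key g' g hr.symm hlt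
    · -- restrictions differ
      have h1 : D o A (δ+1) g ≤ D o A δ (resFn ((le_self_add : δ ≤ δ + 1)) g) := by
        rw [D_succ]; exact inf_le_of_left_le inf_le_left
      have h1' : D o A (δ+1) g' ≤ D o A δ (resFn ((le_self_add : δ ≤ δ + 1)) g') := by
        rw [D_succ]; exact inf_le_of_left_le inf_le_left
      refine le_bot_iff.mp ?_
      refine le_trans (inf_le_inf h1 h1') ?_
      exact le_of_eq (ih _ _ hr)
  | limit δ hδ ih =>
    intro f f' hne
    have : ∃ x : Set.Iio δ, f x ≠ f' x := by
      by_contra h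
      push_neg at h
      exact hne (funext h)
    obtain ⟨x, hx⟩ := this
    have hx1 : x.1 + 1 < δ := hδ.succ_lt x.2
    have hres : resFn hx1.le f ≠ resFn hx1.le f' := by
      intro h
      apply hx
      have := congrFun h ⟨x.1, Order.lt_succ x.1⟩
      exact this
    refine le_bot_iff.mp ?_
    refine le_trans (inf_le_inf (D_res o A δ (x.1+1) hx1.le f)
      (D_res o A δ (x.1+1) hx1.le f')) ?_
    exact le_of_eq (ih _ hx1 _ _ hres)

/-- well-ordered disjointification in a complete Boolean algebra, over `Iio o`. -/
lemma iSup_le_iSup_disj (x : Set.Iio o → B) :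
    ⨆ j, x j ≤ ⨆ j : Set.Iio o, (x j ⊓ (⨆ (j' : Set.Iio o) (_ : j' < j), x j')ᶜ) := by
  refine iSup_le fun j => ?_
  obtain ⟨v, hv⟩ := j
  induction v using Ordinal.induction with
  | h v ihv =>
    have hsplit : x ⟨v, hv⟩ =
        (x ⟨v, hv⟩ ⊓ (⨆ (j' : Set.Iio o) (_ : j' < ⟨v, hv⟩), x j')) ⊔
        (x ⟨v, hv⟩ ⊓ (⨆ (j' : Set.Iio o) (_ : j' < ⟨v, hv⟩), x j')ᶜ) :=
      sup_inf_inf_compl.symm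
    rw [hsplit]
    refine _root_.sup_le ?_
      (le_iSup (fun j : Set.Iio o => x j ⊓ (⨆ (j' : Set.Iio o) (_ : j' < j), x j')ᶜ) ⟨v, hv⟩)
    refine le_trans inf_le_right ?_
    refine iSup_le fun j' => iSup_le fun hj' => ?_
    exact ihv j'.1 hj' j'.2

section
variable (h1' : ∀ β : Ordinal.{u}, β + 1 < o → ∀ f : Set.Iio β → Set.Iio o,
    A β f ≤ ⨆ j : Set.Iio o, A (β + 1) (extFn f j))
  (h2' : ∀ β : Ordinal.{u}, Order.IsSuccLimit β → β < o → ∀ f : Set.Iio β → Set.Iio o,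
    A β f = ⨅ α : Set.Iio β, A α.1 (resFn (le_of_lt α.2) f))

include h1' h2' in
lemma D_cover_succ {β : Ordinal.{u}} (hβ : β + 1 < o) (f : Set.Iio β → Set.Iio o) :
    D o A β f ≤ ⨆ j : Set.Iio o, D o A (β+1) (extFn f j) := by
  have hβo : β < o := lt_of_le_of_lt ((le_self_add : β ≤ β + 1)) hβ
  have hA : D o A β f ≤ A β f :=
    (D_le_bFun o A h2' β hβo.le f).trans (bFun_le_A o A hβo f)
  have hsup : D o A β f ≤ ⨆ j : Set.Iio o, A (β + 1) (extFn f j) :=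
    hA.trans (h1' β hβ f)
  have hsup2 : D o A β f ≤ ⨆ j : Set.Iio o,
      (A (β + 1) (extFn f j) ⊓
        (⨆ (j' : Set.Iio o) (_ : j' < j), A (β + 1) (extFn f j'))ᶜ) :=
    hsup.trans (iSup_le_iSup_disj o _)
  calc D o A β f = D o A β f ⊓ D o A β f := (inf_idem _).symm
    _ ≤ D o A β f ⊓ ⨆ j : Set.Iio o,
        (A (β + 1) (extFn f j) ⊓
          (⨆ (j' : Set.Iio o) (_ : j' < j), A (β + 1) (extFn f j'))ᶜ) :=
      inf_le_inf_left _ hsup2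
    _ = ⨆ j : Set.Iio o, D o A β f ⊓
        (A (β + 1) (extFn f j) ⊓
          (⨆ (j' : Set.Iio o) (_ : j' < j), A (β + 1) (extFn f j'))ᶜ) := inf_iSup_eq _ _
    _ ≤ ⨆ j : Set.Iio o, D o A (β+1) (extFn f j) := by
      refine iSup_mono fun j => ?_
      rw [D_succ, resFn_extFn, extFn_last, inf_assoc]

-- the abstracted distributivity hypothesis at limits
variable (hD : ∀ β : Ordinal.{u}, β ≤ o → Order.IsSuccLimit β →
    ∀ c : Set.Iio β → (Set.Iio β → Set.Iio o) → B,
      ⨅ α : Set.Iio β, ⨆ F : Set.Iio β → Set.Iio o, c α F ≤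
        ⨆ H : Set.Iio β → (Set.Iio β → Set.Iio o), ⨅ α : Set.Iio β, c α (H α))

variable (h0 : (0:Ordinal.{u}) < o)

include h1' h2' hD h0 in
lemma covers : ∀ β : Ordinal.{u}, β ≤ o → (β < o ∨ Order.IsSuccLimit β) →
    A 0 (emptyFn o) ≤ ⨆ f : Set.Iio β → Set.Iio o, D o A β f := by
  intro β
  induction β using Ordinal.limitRecOn with
  | zero =>
    intro _ _
    refine le_trans ?_ (le_iSup _ (emptyFn o))
    rw [D_zero]
  | add_one δ ih =>
    intro hle hside
    have hsucc : δ + 1 < o := by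
      rcases hside with h | h
      · exact h
      · exact absurd h (by simpa using Order.not_isSuccLimit_add_one δ)
    have hδo : δ < o := lt_of_le_of_lt ((le_self_add : δ ≤ δ + 1)) hsucc
    refine le_trans (ih hδo.le (Or.inl hδo)) ?_
    refine iSup_le fun f => ?_
    refine le_trans (D_cover_succ o A h1' h2' hsucc f) ?_
    exact iSup_le fun j => le_iSup _ (extFn f j)
  | limit δ hδ ih =>
    intro hle _
    -- step 1: below the inf of sups
    have step1 : A 0 (emptyFn o) ≤
        ⨅ α : Set.Iio δ, ⨆ F : Set.Iio δ → Set.Iio o,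
          D o A α.1 (resFn (le_of_lt α.2) F) := by
      refine le_iInf fun α => ?_
      have hαo : α.1 < o := lt_of_lt_of_le α.2 hle
      refine le_trans (ih α.1 α.2 hαo.le (Or.inl hαo)) ?_
      refine iSup_le fun f => ?_
      -- extend f to Iio δ arbitrarily
      classical
      refine le_trans ?_ (le_iSup _ (fun x : Set.Iio δ =>
        if h : x.1 < α.1 then f ⟨x.1, h⟩ else ⟨0, h0⟩))
      have : resFn (le_of_lt α.2) (fun x : Set.Iio δ =>
          if h : x.1 < α.1 then f ⟨x.1, h⟩ else ⟨0, h0⟩) = f := by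
        funext x
        exact dif_pos x.2
      rw [this]
    refine le_trans step1 ?_
    refine le_trans (hD δ hle hδ _) ?_
    refine iSup_le fun H => ?_
    by_cases hcoh : ∀ α α' : Set.Iio δ, ∀ h : α.1 ≤ α'.1,
        resFn (h.trans (le_of_lt α'.2)) (H α') = resFn (le_of_lt α.2) (H α)
    · -- coherent: build the diagonal function
      set F : Set.Iio δ → Set.Iio o :=
        fun x => H ⟨x.1 + 1, hδ.succ_lt x.2⟩ x with hF
      have hrestr : ∀ α : Set.Iio δ,
          resFn (le_of_lt α.2) F = resFn (le_of_lt α.2) (H α) := by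
        intro α
        funext x
        have hx1 : x.1 + 1 ≤ α.1 := Order.add_one_le_of_lt x.2
        have := congrFun (hcoh ⟨x.1 + 1, lt_of_le_of_lt hx1 α.2⟩ α hx1)
          ⟨x.1, Order.lt_succ x.1⟩
        simp only [resFn] at this ⊢
        rw [hF]
        exact this.symm
      have : ⨅ α : Set.Iio δ, D o A α.1 (resFn (le_of_lt α.2) (H α)) = D o A δ F := by
        rw [D_limit o A hδ]
        exact iInf_congr fun α => by rw [hrestr]
      rw [this]
      exact le_iSup _ F
    · -- incoherent: the inf is ⊥
      push_neg at hcoh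
      obtain ⟨α, α', h, hne⟩ := hcoh
      have : ⨅ x : Set.Iio δ, D o A x.1 (resFn (le_of_lt x.2) (H x)) ≤ ⊥ := by
        refine le_trans (le_inf (iInf_le _ α') (iInf_le _ α)) ?_
        have d1 : D o A α'.1 (resFn (le_of_lt α'.2) (H α')) ≤
            D o A α.1 (resFn (h.trans (le_of_lt α'.2)) (H α')) :=
          D_res o A α'.1 α.1 h _
        refine le_trans (inf_le_inf d1 le_rfl) ?_
        exact le_of_eq (D_disjoint o A α.1 _ _ hne)
      exact le_trans this bot_le
end


section
variable (h1' : ∀ β : Ordinal.{u}, β + 1 < o → ∀ f : Set.Iio β → Set.Iio o,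
    A β f ≤ ⨆ j : Set.Iio o, A (β + 1) (extFn f j))
  (h2' : ∀ β : Ordinal.{u}, Order.IsSuccLimit β → β < o → ∀ f : Set.Iio β → Set.Iio o,
    A β f = ⨅ α : Set.Iio β, A α.1 (resFn (le_of_lt α.2) f))
  (hD : ∀ β : Ordinal.{u}, β ≤ o → Order.IsSuccLimit β →
    ∀ c : Set.Iio β → (Set.Iio β → Set.Iio o) → B,
      ⨅ α : Set.Iio β, ⨆ F : Set.Iio β → Set.Iio o, c α F ≤
        ⨆ H : Set.Iio β → (Set.Iio β → Set.Iio o), ⨅ α : Set.Iio β, c α (H α))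
  (h0 : (0:Ordinal.{u}) < o)

include h1' h2' hD h0 in
lemma main_aux : A 0 (emptyFn o) ≤ ⨆ F : Set.Iio o → Set.Iio o, bFun o A o F := by
  rcases Ordinal.zero_or_succ_or_isSuccLimit o with hz | ⟨δ, hδ⟩ | hlim
  · exact absurd (hz ▸ h0) (lt_irrefl 0)
  · -- o = succ δ
    have hδo : δ < o := hδ ▸ Order.lt_succ δ
    refine le_trans (covers o A h1' h2' hD h0 δ hδo.le (Or.inl hδo)) ?_
    refine iSup_le fun f => ?_
    refine le_trans (D_le_bFun o A h2' δ hδo.le f) ?_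
    classical
    refine le_trans ?_ (le_iSup _ (fun x : Set.Iio o =>
      if h : x.1 < δ then f ⟨x.1, h⟩ else ⟨0, h0⟩))
    refine le_iInf fun α => le_iInf fun hα => ?_
    have hαδ : α.1 ≤ δ := by
      rw [← Order.lt_succ_iff, hδ]
      exact α.2
    have hres : resFn hα (fun x : Set.Iio o =>
        if h : x.1 < δ then f ⟨x.1, h⟩ else ⟨0, h0⟩) = resFn hαδ f := by
      funext x
      exact dif_pos (lt_of_lt_of_le x.2 hαδ)
    rw [hres]
    exact le_trans (iInf_le _ α) (iInf_le _ hαδ)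
  · refine le_trans (covers o A h1' h2' hD h0 o le_rfl (Or.inr hlim)) ?_
    exact iSup_mono fun F => D_le_bFun o A h2' o le_rfl F
end

end TDAux

open TDAux in
/-- If `κ` is inaccessible and `B` is a complete Boolean algebra satisfying the classical
distributivity law for all index sets of cardinality less than `κ`, then `B` satisfies the
transfinite distributivity law at every cardinal `γ < κ`. -/
theorem completeBooleanAlgebra_classical_distrib_implies_transfiniteDistrib
    (κ : Cardinal.{u}) (hκ : κ.IsInaccessible)
    (B : Type u) [CompleteBooleanAlgebra B]
    (hdist : ∀ (I J : Type u), Cardinal.mk I < κ → Cardinal.mk J < κ →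
      ∀ ψ : I × J → B, ⨅ i : I, ⨆ j : J, ψ (i, j) ≤ ⨆ f : I → J, ⨅ i : I, ψ (i, f i))
    (γ : Cardinal.{u}) (hγ : γ < κ) :
    TransfiniteDistrib B γ.ord := by
  intro h0 a h1 h2
  classical
  -- derive the abstract distributivity hypothesis at limit stages from `hdist`
  have hD : ∀ β : Ordinal.{u}, β ≤ γ.ord → Order.IsSuccLimit β →
      ∀ c : Set.Iio β → (Set.Iio β → Set.Iio γ.ord) → B,
        ⨅ α : Set.Iio β, ⨆ F : Set.Iio β → Set.Iio γ.ord, c α F ≤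
          ⨆ H : Set.Iio β → (Set.Iio β → Set.Iio γ.ord), ⨅ α : Set.Iio β, c α (H α) := by
    intro β hβle hβlim c
    have hcardβ : β.card ≤ γ := le_trans (Ordinal.card_le_card hβle)
      (le_of_eq (Cardinal.card_ord γ))
    have hI : Cardinal.mk β.ToType < κ := by
      rw [Cardinal.mk_toType]
      exact lt_of_le_of_lt hcardβ hγ
    have hγinf : Cardinal.aleph0 ≤ γ := by
      refine le_trans ?_ hcardβ
      rw [Ordinal.aleph0_le_card]
      exact Ordinal.omega0_le_of_isSuccLimit hβlim
    have hJ : Cardinal.mk (β.ToType → (γ.ord).ToType) < κ := by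
      have heq : Cardinal.mk (β.ToType → (γ.ord).ToType) = γ ^ β.card := by
        rw [← Cardinal.power_def, Cardinal.mk_toType, Cardinal.mk_toType,
          Cardinal.card_ord]
      rw [heq]
      calc γ ^ β.card ≤ (2 ^ γ) ^ β.card :=
            Cardinal.power_le_power_right (Cardinal.cantor γ).le
        _ = 2 ^ (γ * β.card) := (Cardinal.power_mul).symm
        _ ≤ 2 ^ γ := by
            refine Cardinal.power_le_power_left two_ne_zero ?_
            calc γ * β.card ≤ γ * γ := mul_le_mul_right hcardβ γ
              _ = γ := Cardinal.mul_eq_self hγinf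
        _ < κ := hκ.3 hγ
    set e : Set.Iio β ≃ β.ToType := (Ordinal.ToType.mk (o := β)).toEquiv with he
    set cv : (Set.Iio β → Set.Iio γ.ord) ≃ (β.ToType → (γ.ord).ToType) :=
      Equiv.arrowCongr e (Ordinal.ToType.mk (o := γ.ord)).toEquiv with hcv
    have key := hdist β.ToType (β.ToType → (γ.ord).ToType) hI hJ
      (fun p => c (e.symm p.1) (cv.symm p.2))
    refine le_trans (le_iInf fun i => ?_) (le_trans key ?_)
    · refine le_trans (iInf_le _ (e.symm i)) ?_
      refine iSup_le fun F => ?_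
      refine le_trans (le_of_eq ?_) (le_iSup
        (fun j => c (e.symm i) (cv.symm j)) (cv F))
      rw [Equiv.symm_apply_apply]
    · refine iSup_le fun Φ => ?_
      refine le_trans ?_ (le_iSup _ (fun α => cv.symm (Φ (e α))))
      refine le_iInf fun α => ?_
      refine le_trans (iInf_le _ (e α)) (le_of_eq ?_)
      rw [Equiv.symm_apply_apply]
  -- the auxiliary family `A`
  let A : ∀ β : Ordinal.{u}, (Set.Iio β → Set.Iio γ.ord) → B :=
    fun β f => if h : β < γ.ord then a ⟨β, h⟩ f else ⊥
  have hAeq : ∀ (β : Ordinal.{u}) (h : β < γ.ord) (f : Set.Iio β → Set.Iio γ.ord),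
      A β f = a ⟨β, h⟩ f := fun β h f => dif_pos h
  -- derive h1'
  have h1' : ∀ β : Ordinal.{u}, β + 1 < γ.ord → ∀ f : Set.Iio β → Set.Iio γ.ord,
      A β f ≤ ⨆ j : Set.Iio γ.ord, A (β + 1) (extFn f j) := by
    intro β hβ f
    have hβo : β < γ.ord := lt_of_le_of_lt ((le_self_add : β ≤ β + 1)) hβ
    rw [hAeq β hβo f]
    refine le_trans (h1 β hβ f) ?_
    refine iSup_le fun g => ?_
    obtain ⟨g, hg⟩ := g
    refine le_trans ?_ (le_iSup _ (g ⟨β, Order.lt_succ β⟩))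
    rw [hAeq (β+1) hβ]
    subst hg
    rw [extFn_resFn]
  -- derive h2'
  have h2' : ∀ β : Ordinal.{u}, Order.IsSuccLimit β → β < γ.ord → ∀ f : Set.Iio β → Set.Iio γ.ord,
      A β f = ⨅ α : Set.Iio β, A α.1 (resFn (le_of_lt α.2) f) := by
    intro β hlim hβo f
    rw [hAeq β hβo f, h2 ⟨β, hβo⟩ hlim f]
    exact iInf_congr fun α => (hAeq α.1 (lt_trans α.2 hβo) _).symm
  -- conclude
  have hmain := main_aux γ.ord A h1' h2' hD h0
  rw [hAeq 0 h0 (emptyFn γ.ord)] at hmain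
  refine le_trans hmain ?_
  refine iSup_le fun F => ?_
  refine le_trans ?_ (le_iSup _ F)
  refine le_iInf fun β => ?_
  refine le_trans (iInf_le _ β) (le_trans (iInf_le _ (le_of_lt β.2)) ?_)
  rw [hAeq β.1 β.2]
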